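/- arXiv:1403.3170 — 2 statements merged into one kernel-verified Lean document; each statement's English description precedes it below -/
import Mathlib

section
/- Let A be a nonzero m×n complex matrix and B an s×t complex matrix. Then Σ_{d=1}^{n} [A e_{d,n} ⊗ I_s]* (A⊗B) [e_{d,n} ⊗ I_t] = ‖A‖_F² · B, where e_{d,n} is the d-th standard basis column vector of ℂ^n, I_s is the s×s identity matrix, X* denotes the conjugate transpose of X, and ‖A‖_F = √(tr(A*A)) is the Frobenius norm. Equivalently, the left Frobenius Kronecker quotient A ⊘_F (A⊗B) = B, and ⊘_F is the uniform left Kronecker quotient realized by Q(A) = conj(A)/‖A‖_F², i.e. (conj(A)/‖A‖_F²) ∘ (A⊗B) = B. -/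
/-!
Theorem: let `A` be a nonzero `m × n` complex matrix and `B` an `s × t` complex
matrix.  Then `∑_{d=1}^{n} [A e_d ⊗ I_s]* (A ⊗ B) [e_d ⊗ I_t] = ‖A‖_F² • B`,
where `‖A‖_F² = tr (Aᴴ A)`.  Equivalently, the left Frobenius Kronecker
quotient satisfies `A ⊘_F (A ⊗ B) = B`; it is the uniform left Kronecker
quotient realized by `Q(A) = conj(A) / ‖A‖_F²`, i.e.
`(conj(A)/‖A‖_F²) ∘ (A ⊗ B) = B` for the partial Frobenius product `∘`.
-/

open Matrix
open scoped Kronecker ComplexConjugate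

/-- The partial Frobenius product `A ∘ M`:
`(A ∘ M)_{u,v} = ∑_{j,k} A_{j,k} M_{(j,u),(k,v)}`. -/
noncomputable def pfrob {I J S T : Type*} [Fintype I] [Fintype J]
    (A : Matrix I J ℂ) (M : Matrix (I × S) (J × T) ℂ) : Matrix S T ℂ :=
  Matrix.of fun u v => ∑ j, ∑ k, A j k * M (j, u) (k, v)

lemma tr_eq {m n : ℕ} (A : Matrix (Fin m) (Fin n) ℂ) :
    Matrix.trace (Aᴴ * A) = ((∑ j, ∑ k, Complex.normSq (A j k) : ℝ) : ℂ) := by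
  simp only [Matrix.trace, Matrix.diag, Matrix.mul_apply, Matrix.conjTranspose_apply]
  push_cast
  rw [Finset.sum_comm]
  congr 1; ext j; congr 1; ext k
  rw [Complex.normSq_eq_conj_mul_self]; rfl

lemma tr_ne {m n : ℕ} (A : Matrix (Fin m) (Fin n) ℂ) (hA : A ≠ 0) :
    Matrix.trace (Aᴴ * A) ≠ 0 := by
  rw [tr_eq]
  norm_cast
  have : ∃ j k, A j k ≠ 0 := by
    by_contra h; push_neg at h; exact hA (by ext j k; simp [h])
  obtain ⟨j, k, hjk⟩ := this
  have hpos : 0 < ∑ j, ∑ k, Complex.normSq (A j k) := by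
    apply Finset.sum_pos' (fun i _ => Finset.sum_nonneg fun l _ => Complex.normSq_nonneg _)
    exact ⟨j, Finset.mem_univ _, Finset.sum_pos' (fun l _ => Complex.normSq_nonneg _)
      ⟨k, Finset.mem_univ _, Complex.normSq_pos.2 hjk⟩⟩
  exact ne_of_gt hpos


theorem frobenius_partial_norm_of_kronecker
    {m n s t : ℕ}
    (A : Matrix (Fin m) (Fin n) ℂ) (hA : A ≠ 0)
    (B : Matrix (Fin s) (Fin t) ℂ) :
    (Matrix.reindex (Equiv.uniqueProd (Fin s) (Fin 1))
        (Equiv.uniqueProd (Fin t) (Fin 1))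
      (∑ d : Fin n,
        ((Matrix.replicateCol (Fin 1) (A.mulVec (Pi.single d 1)))ᴴ ⊗ₖ
            (1 : Matrix (Fin s) (Fin s) ℂ)) *
          (A ⊗ₖ B) *
          ((Matrix.replicateCol (Fin 1) (Pi.single d (1 : ℂ))) ⊗ₖ
            (1 : Matrix (Fin t) (Fin t) ℂ))) = Matrix.trace (Aᴴ * A) • B) ∧
    pfrob ((Matrix.trace (Aᴴ * A))⁻¹ • A.map (starRingEnd ℂ)) (A ⊗ₖ B) = B := by
  have htr : Matrix.trace (Aᴴ * A) = ∑ d : Fin n, ∑ j : Fin m, conj (A j d) * A j d := by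
    simp [Matrix.trace, Matrix.diag, Matrix.mul_apply, Matrix.conjTranspose_apply]
  constructor
  · ext u v
    simp only [Matrix.reindex_apply, Matrix.submatrix_apply, Equiv.uniqueProd_symm_apply,
      Finset.sum_apply, Matrix.sum_apply, Matrix.mul_apply, Matrix.kroneckerMap_apply,
      Matrix.conjTranspose_apply, Matrix.replicateCol_apply, Matrix.one_apply, Matrix.smul_apply,
      Fintype.sum_prod_type, Matrix.mulVec_single, smul_eq_mul]
    rw [htr]
    rw [Finset.sum_mul]
    congr 1; ext d
    rw [Finset.sum_comm]
    simp [Pi.single_apply, mul_comm, mul_assoc, mul_left_comm, Finset.mul_sum,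
      Finset.sum_mul, apply_ite, ite_and]
  · ext u v
    have hc := tr_ne A hA
    simp only [pfrob, Matrix.of_apply, Matrix.smul_apply, Matrix.map_apply,
      Matrix.kroneckerMap_apply, smul_eq_mul]
    have : ∑ j, ∑ k, (Matrix.trace (Aᴴ * A))⁻¹ * conj (A j k) * (A j k * B u v)
        = (Matrix.trace (Aᴴ * A))⁻¹ * (∑ j, ∑ k, conj (A j k) * A j k) * B u v := by
      simp only [Finset.sum_mul, Finset.mul_sum]
      exact Finset.sum_congr rfl fun j _ => Finset.sum_congr rfl fun k _ => by ring
    rw [this, show (∑ j : Fin m, ∑ k : Fin n, conj (A j k) * A j k) = Matrix.trace (Aᴴ * A)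
      from by rw [htr, Finset.sum_comm], inv_mul_cancel₀ hc, one_mul]
end

section
/- Let A be a nonzero m×n complex matrix, let M be an ms×nt complex matrix, and set X₀ := (conj(A)/‖A‖_F²) ∘ M ∈ M(ℂ,s,t), where ∘ denotes the partial Frobenius product. Then X₀ minimizes the Frobenius-norm distance to M among Kronecker multiples of A: for every X ∈ M(ℂ,s,t), ‖M − A⊗X₀‖_F ≤ ‖M − A⊗X‖_F. -/
/-!
Theorem: let `A` be a nonzero `m × n` complex matrix, `M` an `ms × nt` complex
matrix, and `X₀ := (conj(A)/‖A‖_F²) ∘ M` (partial Frobenius product, where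
`‖A‖_F² = tr (Aᴴ A)`).  Then `X₀` minimizes the Frobenius-norm distance to `M`
among Kronecker multiples of `A`: for every `s × t` complex matrix `X`,
`‖M - A ⊗ X₀‖_F ≤ ‖M - A ⊗ X‖_F`.
-/

open Matrix
open scoped Kronecker ComplexConjugate

/-- The Frobenius norm of a complex matrix. -/
noncomputable def frobNorm {I J : Type*} [Fintype I] [Fintype J]
    (M : Matrix I J ℂ) : ℝ :=
  Real.sqrt (∑ i, ∑ j, ‖M i j‖ ^ 2)

open Complex in
lemma scalar_least_squares {I : Type*} [Fintype I] (a w : I → ℂ)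
    {cR : ℝ} (hc : (cR:ℝ) = ∑ i, normSq (a i)) (hcpos : 0 < cR) (x : ℂ) :
    ∑ i, normSq (w i - a i * ((cR : ℂ)⁻¹ * ∑ i, conj (a i) * w i))
      ≤ ∑ i, normSq (w i - a i * x) := by
  set P : ℂ := ∑ i, conj (a i) * w i with hP
  have expand : ∀ y : ℂ, ∑ i, normSq (w i - a i * y)
      = (∑ i, normSq (w i)) + cR * normSq y - 2 * (P * conj y).re := by
    intro y
    have h : ∀ i, normSq (w i - a i * y)
        = normSq (w i) + normSq (a i) * normSq y - 2 * ((conj (a i) * w i) * conj y).re := by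
      intro i
      rw [Complex.normSq_sub, Complex.normSq_mul]
      congr 1
      have : w i * conj (a i * y) = conj (a i) * w i * conj y := by
        rw [_root_.map_mul]; ring
      rw [this]
    simp only [h, Finset.sum_sub_distrib, Finset.sum_add_distrib, ← Finset.sum_mul,
      ← hc, ← Finset.mul_sum]
    congr 2
    rw [← Complex.re_sum]
    congr 1
    rw [hP, Finset.sum_mul]
  rw [expand, expand]
  have h1 : normSq ((cR : ℂ)⁻¹ * P) = cR⁻¹ * cR⁻¹ * normSq P := by
    rw [Complex.normSq_mul]
    simp [Complex.normSq_inv, Complex.normSq_ofReal]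
  have h2 : (P * conj ((cR : ℂ)⁻¹ * P)).re = cR⁻¹ * normSq P := by
    rw [_root_.map_mul]
    have : P * ((starRingEnd ℂ) (cR:ℂ)⁻¹ * conj P) = (starRingEnd ℂ) (cR:ℂ)⁻¹ * (P * conj P) := by
      ring
    rw [this, Complex.mul_conj]
    simp [← Complex.ofReal_inv, ← Complex.ofReal_mul]
  rw [h1, h2]
  have h3 : 0 ≤ normSq ((cR:ℂ) * x - P) := Complex.normSq_nonneg _
  have h4 : normSq ((cR:ℂ) * x - P)
      = cR * cR * normSq x + normSq P - 2 * (cR * (P * conj x).re) := by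
    rw [Complex.normSq_sub, Complex.normSq_mul, Complex.normSq_ofReal]
    have e1 : ((cR:ℂ) * x * conj P).re = cR * (x * conj P).re := by
      rw [mul_assoc, Complex.re_ofReal_mul]
    rw [e1]
    have e2 : (x * conj P).re = (P * conj x).re := by
      rw [← Complex.conj_re (x * conj P), map_mul (starRingEnd ℂ), Complex.conj_conj, mul_comm]
    rw [e2]
  have h6 : 0 ≤ cR⁻¹ * (cR * cR * normSq x + normSq P - 2 * (cR * (P * conj x).re)) :=
    mul_nonneg (inv_nonneg.2 hcpos.le) (h4 ▸ h3)
  have h7 : cR⁻¹ * (cR * cR * normSq x + normSq P - 2 * (cR * (P * conj x).re))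
      = cR * normSq x + cR⁻¹ * normSq P - 2 * (P * conj x).re := by
    field_simp
  have h8 : cR * (cR⁻¹ * cR⁻¹ * normSq P) = cR⁻¹ * normSq P := by
    field_simp
  linarith [h6, h8, h7.symm ▸ h6]

open Complex in
lemma reindex_sum {m n s t : ℕ}
    (A : Matrix (Fin m) (Fin n) ℂ)
    (M : Matrix (Fin m × Fin s) (Fin n × Fin t) ℂ)
    (Y : Matrix (Fin s) (Fin t) ℂ) :
    ∑ i : Fin m × Fin s, ∑ j : Fin n × Fin t, normSq ((M - A ⊗ₖ Y) i j)
    = ∑ u : Fin s, ∑ v : Fin t, ∑ p : Fin m × Fin n,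
        normSq (M (p.1, u) (p.2, v) - A p.1 p.2 * Y u v) := by
  calc ∑ i : Fin m × Fin s, ∑ j : Fin n × Fin t, normSq ((M - A ⊗ₖ Y) i j)
      = ∑ x : (Fin m × Fin s) × (Fin n × Fin t), normSq ((M - A ⊗ₖ Y) x.1 x.2) :=
        (Fintype.sum_prod_type (f := fun x => normSq ((M - A ⊗ₖ Y) x.1 x.2))).symm
    _ = ∑ x : (Fin s × Fin t) × (Fin m × Fin n),
          normSq (M (x.2.1, x.1.1) (x.2.2, x.1.2) - A x.2.1 x.2.2 * Y x.1.1 x.1.2) := by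
        refine (Fintype.sum_equiv
          (⟨fun x => ((x.2.1, x.1.1), (x.2.2, x.1.2)),
            fun y => ((y.1.2, y.2.2), (y.1.1, y.2.1)),
            fun _ => rfl, fun _ => rfl⟩ :
            ((Fin s × Fin t) × (Fin m × Fin n)) ≃ ((Fin m × Fin s) × (Fin n × Fin t)))
          _ _ ?_).symm
        rintro ⟨⟨u, v⟩, ⟨j, k⟩⟩
        simp [Matrix.sub_apply, Matrix.kroneckerMap_apply]
    _ = ∑ q : Fin s × Fin t, ∑ p : Fin m × Fin n,
          normSq (M (p.1, q.1) (p.2, q.2) - A p.1 p.2 * Y q.1 q.2) :=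
        Fintype.sum_prod_type _
    _ = ∑ u : Fin s, ∑ v : Fin t, ∑ p : Fin m × Fin n,
          normSq (M (p.1, u) (p.2, v) - A p.1 p.2 * Y u v) :=
        Fintype.sum_prod_type (f := fun q => ∑ p : Fin m × Fin n,
          normSq (M (p.1, q.1) (p.2, q.2) - A p.1 p.2 * Y q.1 q.2))

theorem frobenius_kronecker_quotient_minimizes
    {m n s t : ℕ}
    (A : Matrix (Fin m) (Fin n) ℂ) (hA : A ≠ 0)
    (M : Matrix (Fin m × Fin s) (Fin n × Fin t) ℂ) :
    ∀ X : Matrix (Fin s) (Fin t) ℂ,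
      frobNorm (M - A ⊗ₖ pfrob ((Matrix.trace (Aᴴ * A))⁻¹ • A.map (starRingEnd ℂ)) M) ≤
        frobNorm (M - A ⊗ₖ X) := by
  intro X
  set cR : ℝ := ∑ p : Fin m × Fin n, Complex.normSq (A p.1 p.2) with hcR
  have htrace : Matrix.trace (Aᴴ * A) = (cR : ℂ) := by
    rw [hcR]
    simp [Matrix.trace, Matrix.mul_apply, Matrix.diag, Matrix.conjTranspose_apply,
      ← Complex.normSq_eq_conj_mul_self, Fintype.sum_prod_type]
    rw [Finset.sum_comm]
  have hcpos : 0 < cR := by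
    obtain ⟨j, k, hjk⟩ : ∃ j k, A j k ≠ 0 := by
      by_contra h
      push_neg at h
      exact hA (by ext j k; simp [h])
    exact Finset.sum_pos' (fun p _ => Complex.normSq_nonneg _)
      ⟨(j,k), Finset.mem_univ _, Complex.normSq_pos.2 hjk⟩
  have hX0 : ∀ u v, pfrob ((Matrix.trace (Aᴴ * A))⁻¹ • A.map (starRingEnd ℂ)) M u v
      = (cR : ℂ)⁻¹ * ∑ p : Fin m × Fin n, conj (A p.1 p.2) * M (p.1, u) (p.2, v) := by
    intro u v
    simp only [pfrob, Matrix.of_apply, Matrix.smul_apply, Matrix.map_apply, smul_eq_mul, htrace]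
    rw [show (∑ p : Fin m × Fin n, conj (A p.1 p.2) * M (p.1, u) (p.2, v))
        = ∑ j, ∑ k, conj (A j k) * M (j, u) (k, v) from Fintype.sum_prod_type _]
    simp [Finset.mul_sum, mul_assoc]
  unfold frobNorm
  apply Real.sqrt_le_sqrt
  simp only [Complex.sq_norm]
  rw [reindex_sum, reindex_sum]
  refine Finset.sum_le_sum fun u _ => Finset.sum_le_sum fun v _ => ?_
  rw [show (pfrob ((Matrix.trace (Aᴴ * A))⁻¹ • A.map (starRingEnd ℂ)) M) u v
      = (cR : ℂ)⁻¹ * ∑ p : Fin m × Fin n, conj (A p.1 p.2) * M (p.1, u) (p.2, v) from hX0 u v]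
  exact scalar_least_squares (fun p : Fin m × Fin n => A p.1 p.2)
    (fun p => M (p.1, u) (p.2, v)) hcR hcpos (X u v)
end
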